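/- arXiv:math/9406218 — 3 statements merged into one kernel-verified Lean document; each statement's English description precedes it below -/
import Mathlib

section
/- Let Γ be an (additively written) abelian group and let P ⊆ Γ be an order on Γ. Then for every finite subset F ⊆ Γ there exists a group homomorphism ψ : Γ → ℝ such that sgn_P(χ) = sgn(ψ(χ)) for all χ ∈ F, where sgn denotes the usual signum function on ℝ. -/
section Holder

variable {G : Type*} [AddCommGroup G] [LinearOrder G] [IsOrderedAddMonoid G]

/-- The set of rationals `p/q` with `p • g ≤ q • x`. -/
private def ratioSet (g x : G) : Set ℝ :=
  {r | ∃ p q : ℤ, 0 < q ∧ r = (p : ℝ) / (q : ℝ) ∧ p • g ≤ q • x}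

/-- The convex subgroup of elements bounded by multiples of `g`. -/
private def boundedSub (g : G) : AddSubgroup G where
  carrier := {x | ∃ n : ℤ, |x| ≤ n • g}
  zero_mem' := ⟨0, by simp⟩
  add_mem' := by
    rintro a b ⟨n, hn⟩ ⟨m, hm⟩
    exact ⟨n + m, (abs_add_le _ _).trans (by rw [add_zsmul]; exact add_le_add hn hm)⟩
  neg_mem' := by rintro a ⟨n, hn⟩; exact ⟨n, by rwa [abs_neg]⟩

private lemma ratioSet_nonempty {g x : G} (hx : x ∈ boundedSub g) :
    (ratioSet g x).Nonempty := by
  obtain ⟨n, hn⟩ := hx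
  refine ⟨((-n : ℤ) : ℝ) / ((1 : ℤ) : ℝ), -n, 1, one_pos, rfl, ?_⟩
  rw [neg_zsmul, one_zsmul]
  exact neg_le_of_abs_le hn

private lemma ratioSet_bddAbove {g x : G} (hg : 0 < g) (hx : x ∈ boundedSub g) :
    BddAbove (ratioSet g x) := by
  obtain ⟨n, hn⟩ := hx
  refine ⟨(n : ℝ), ?_⟩
  rintro r ⟨p, q, hq, rfl, hpq⟩
  have h1 : q • x ≤ (q * n) • g := by
    rw [mul_zsmul]
    exact zsmul_le_zsmul_right hq.le (le_of_abs_le hn)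
  have h2 : p ≤ q * n := (zsmul_le_zsmul_iff_left hg).mp (hpq.trans h1)
  rw [div_le_iff₀ (by exact_mod_cast hq)]
  exact_mod_cast h2.trans_eq (mul_comm q n)

private noncomputable def hfun (g x : G) : ℝ := sSup (ratioSet g x)

private lemma hfun_superadd {g x y : G} (hg : 0 < g) (hx : x ∈ boundedSub g)
    (hy : y ∈ boundedSub g) : hfun g x + hfun g y ≤ hfun g (x + y) := by
  have hxy : x + y ∈ boundedSub g := add_mem hx hy
  have key : ∀ r ∈ ratioSet g x, ∀ t ∈ ratioSet g y, r + t ∈ ratioSet g (x + y) := by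
    rintro r ⟨p1, q1, hq1, rfl, h1⟩ t ⟨p2, q2, hq2, rfl, h2⟩
    refine ⟨p1 * q2 + p2 * q1, q1 * q2, mul_pos hq1 hq2, ?_, ?_⟩
    · have hq1' : ((q1 : ℝ)) ≠ 0 := by exact_mod_cast hq1.ne'
      have hq2' : ((q2 : ℝ)) ≠ 0 := by exact_mod_cast hq2.ne'
      push_cast
      field_simp
    · have e1 : (p1 * q2 + p2 * q1) • g = q2 • (p1 • g) + q1 • (p2 • g) := by module
      have e2 : (q1 * q2) • (x + y) = q2 • (q1 • x) + q1 • (q2 • y) := by module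
      rw [e1, e2]
      exact add_le_add (zsmul_le_zsmul_right hq2.le h1) (zsmul_le_zsmul_right hq1.le h2)
  have h1 : ∀ r ∈ ratioSet g x, r + hfun g y ≤ hfun g (x + y) := by
    intro r hr
    have : hfun g y ≤ hfun g (x + y) - r := by
      refine csSup_le (ratioSet_nonempty hy) fun t ht => ?_
      have h2 := le_csSup (ratioSet_bddAbove hg hxy) (key r hr t ht)
      have h3 : hfun g (x + y) = sSup (ratioSet g (x + y)) := rfl
      linarith
    linarith
  have : hfun g x ≤ hfun g (x + y) - hfun g y := by
    refine csSup_le (ratioSet_nonempty hx) fun r hr => ?_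
    have := h1 r hr
    linarith
  linarith

private lemma hfun_subadd {g x y : G} (hg : 0 < g) (hx : x ∈ boundedSub g)
    (hy : y ∈ boundedSub g) : hfun g (x + y) ≤ hfun g x + hfun g y := by
  have hxy : x + y ∈ boundedSub g := add_mem hx hy
  refine csSup_le (ratioSet_nonempty hxy) ?_
  rintro r ⟨p, q, hq, rfl, hpq⟩
  refine le_of_forall_pos_le_add fun ε hε => ?_
  obtain ⟨a, ha1, ha2⟩ := exists_rat_btwn (lt_add_of_pos_right (hfun g x) (half_pos hε))
  obtain ⟨b, hb1, hb2⟩ := exists_rat_btwn (lt_add_of_pos_right (hfun g y) (half_pos hε))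
  have hax : (a.den : ℤ) • x < a.num • g := by
    by_contra h
    push_neg at h
    have hmem : (a : ℝ) ∈ ratioSet g x :=
      ⟨a.num, a.den, by exact_mod_cast a.pos, by push_cast [Rat.cast_def]; norm_num, h⟩
    exact absurd (le_csSup (ratioSet_bddAbove hg hx) hmem) (not_le.mpr ha1)
  have hby : (b.den : ℤ) • y < b.num • g := by
    by_contra h
    push_neg at h
    have hmem : (b : ℝ) ∈ ratioSet g y :=
      ⟨b.num, b.den, by exact_mod_cast b.pos, by push_cast [Rat.cast_def]; norm_num, h⟩
    exact absurd (le_csSup (ratioSet_bddAbove hg hy) hmem) (not_le.mpr hb1)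
  set p1 : ℤ := a.num
  set q1 : ℤ := (a.den : ℤ) with hq1def
  set p2 : ℤ := b.num
  set q2 : ℤ := (b.den : ℤ) with hq2def
  have hq1 : 0 < q1 := Int.natCast_pos.mpr a.pos
  have hq2 : 0 < q2 := Int.natCast_pos.mpr b.pos
  -- main integer inequality
  have main : p * q1 * q2 ≤ q * q2 * p1 + q * q1 * p2 := by
    have c1 : (p * q1 * q2) • g = (q1 * q2) • (p • g) := by module
    have c2 : (q1 * q2) • (q • (x + y)) = (q * q2) • (q1 • x) + (q * q1) • (q2 • y) := by
      module
    have c3 : (q * q2) • (q1 • x) ≤ (q * q2) • (p1 • g) :=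
      zsmul_le_zsmul_right (by positivity) hax.le
    have c4 : (q * q1) • (q2 • y) ≤ (q * q1) • (p2 • g) :=
      zsmul_le_zsmul_right (by positivity) hby.le
    have c5 : (q * q2) • (p1 • g) + (q * q1) • (p2 • g) = (q * q2 * p1 + q * q1 * p2) • g := by
      module
    have : (p * q1 * q2) • g ≤ (q * q2 * p1 + q * q1 * p2) • g := by
      calc (p * q1 * q2) • g = (q1 * q2) • (p • g) := c1
        _ ≤ (q1 * q2) • (q • (x + y)) := zsmul_le_zsmul_right (by positivity) hpq
        _ = (q * q2) • (q1 • x) + (q * q1) • (q2 • y) := c2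
        _ ≤ (q * q2) • (p1 • g) + (q * q1) • (p2 • g) := add_le_add c3 c4
        _ = (q * q2 * p1 + q * q1 * p2) • g := c5
    exact (zsmul_le_zsmul_iff_left hg).mp this
  have hqR : (0 : ℝ) < (q : ℝ) := by exact_mod_cast hq
  have hq1R : (0 : ℝ) < (q1 : ℝ) := by exact_mod_cast hq1
  have hq2R : (0 : ℝ) < (q2 : ℝ) := by exact_mod_cast hq2
  have hab : ((p : ℝ)) / (q : ℝ) ≤ (a : ℝ) + (b : ℝ) := by
    have ea : (a : ℝ) = (p1 : ℝ) / (q1 : ℝ) := by rw [Rat.cast_def]; push_cast [hq1def]; ring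
    have eb : (b : ℝ) = (p2 : ℝ) / (q2 : ℝ) := by rw [Rat.cast_def]; push_cast [hq2def]; ring
    rw [ea, eb, div_add_div _ _ hq1R.ne' hq2R.ne', div_le_div_iff₀ hqR (by positivity)]
    have mainR : ((p * q1 * q2 : ℤ) : ℝ) ≤ ((q * q2 * p1 + q * q1 * p2 : ℤ) : ℝ) := by
      exact_mod_cast main
    push_cast at mainR ⊢
    nlinarith [mainR]
  calc ((p : ℝ)) / (q : ℝ) ≤ (a : ℝ) + (b : ℝ) := hab
    _ ≤ hfun g x + ε / 2 + (hfun g y + ε / 2) := add_le_add ha2.le hb2.le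
    _ = hfun g x + hfun g y + ε := by ring

private lemma hfun_nonneg {g x : G} (hg : 0 < g) (hx : x ∈ boundedSub g) (h0 : 0 ≤ x) :
    0 ≤ hfun g x := by
  have : (0 : ℝ) ∈ ratioSet g x := ⟨0, 1, one_pos, by norm_num, by simpa using h0⟩
  exact le_csSup (ratioSet_bddAbove hg hx) this

private lemma hfun_pos {g x : G} (hg : 0 < g) (hx : x ∈ boundedSub g) {n : ℤ}
    (hn : 0 < n) (h : g ≤ n • x) : 0 < hfun g x := by
  have hmem : (1 : ℝ) / (n : ℝ) ∈ ratioSet g x := ⟨1, n, hn, by norm_num, by simpa using h⟩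
  have : (1 : ℝ) / (n : ℝ) ≤ hfun g x := le_csSup (ratioSet_bddAbove hg hx) hmem
  have hnR : (0 : ℝ) < (n : ℝ) := by exact_mod_cast hn
  calc (0 : ℝ) < 1 / (n : ℝ) := by positivity
    _ ≤ hfun g x := this

private lemma hfun_zero_of_inf {g x : G} (hg : 0 < g) (hx : x ∈ boundedSub g)
    (hpos : 0 < x) (h : ∀ n : ℤ, n • x < g) : hfun g x = 0 := by
  refine le_antisymm ?_ (hfun_nonneg hg hx hpos.le)
  refine csSup_le (ratioSet_nonempty hx) ?_
  rintro r ⟨p, q, hq, rfl, hpq⟩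
  have hp : p ≤ 0 := by
    by_contra hp
    push_neg at hp
    have h1 : g ≤ p • g := by
      have := (zsmul_le_zsmul_iff_left (n := p) (m := 1) hg).mpr hp
      simpa using this
    exact absurd (hpq.trans_lt (h q)) (not_lt.mpr h1)
  have : (p : ℝ) ≤ 0 := by exact_mod_cast hp
  have hqR : (0 : ℝ) < (q : ℝ) := by exact_mod_cast hq
  exact div_nonpos_of_nonpos_of_nonneg this hqR.le

/-- Key lemma: for finitely many strictly positive elements of a linearly ordered abelian
group, there is a real character strictly positive on all of them. -/
theorem exists_pos_addMonoidHom (s : Finset G) :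
    (∀ x ∈ s, 0 < x) → ∃ ψ : G →+ ℝ, ∀ x ∈ s, 0 < ψ x := by
  classical
  induction s using Finset.strongInduction with
  | _ s ih =>
    intro hs
    rcases s.eq_empty_or_nonempty with rfl | hne
    · exact ⟨0, by simp⟩
    set g : G := ∑ x ∈ s, x with hgdef
    have hg : 0 < g := Finset.sum_pos hs hne
    have hxg : ∀ x ∈ s, x ≤ g :=
      fun x hx => Finset.single_le_sum (fun y hy => (hs y hy).le) hx
    have hxH : ∀ x ∈ s, x ∈ boundedSub g := by
      intro x hx
      exact ⟨1, by rw [abs_of_pos (hs x hx), one_zsmul]; exact hxg x hx⟩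
    -- the infinitesimal part
    set s' : Finset G := s.filter (fun x => ∀ n : ℤ, n • x < g) with hs'def
    have hsub : s' ⊂ s := by
      obtain ⟨m, hm, hmax⟩ : ∃ m ∈ s, ∀ x ∈ s, x ≤ m := s.exists_max_image id hne
      refine Finset.filter_ssubset.mpr ⟨m, hm, ?_⟩
      push_neg
      refine ⟨(s.card : ℤ), not_lt.mp ?_⟩
      push_neg
      calc g = ∑ x ∈ s, id x := rfl
        _ ≤ s.card • m := Finset.sum_le_card_nsmul s id m (fun x hx => hmax x hx)
        _ = (s.card : ℤ) • m := (natCast_zsmul m s.card).symm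
    obtain ⟨θ, hθ⟩ := ih s' hsub (fun x hx => hs x (Finset.mem_filter.mp hx).1)
    -- the Hölder functional on the bounded subgroup
    set H : AddSubgroup G := boundedSub g
    have fadd : ∀ a b : H, hfun g ((a : G) + (b : G)) = hfun g (a : G) + hfun g (b : G) :=
      fun a b => le_antisymm (hfun_subadd hg a.2 b.2) (hfun_superadd hg a.2 b.2)
    set f : H →+ ℝ := AddMonoidHom.mk' (fun x => hfun g (x : G)) (fun a b => fadd a b)
    obtain ⟨Ψ, hΨ⟩ := Module.Baer.extension_property_addMonoidHom
      (Module.Baer.of_divisible ℝ) H.subtype (fun _ _ h => Subtype.ext h) f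
    have hΨeq : ∀ x (hx : x ∈ H), Ψ x = hfun g x := by
      intro x hx
      have := DFunLike.congr_fun hΨ (⟨x, hx⟩ : H)
      simpa [f] using this
    -- positivity data
    have hpos' : ∀ x ∈ s, x ∉ s' → 0 < Ψ x := by
      intro x hx hx'
      rw [hΨeq x (hxH x hx)]
      rw [hs'def, Finset.mem_filter] at hx'
      push_neg at hx'
      obtain ⟨n, hn⟩ := hx' hx
      have hn0 : 0 < n := by
        by_contra hn0
        push_neg at hn0
        have : n • x ≤ 0 := by
          have h := zsmul_le_zsmul_left (hs x hx).le hn0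
          simpa using h
        exact absurd (hg.trans_le hn) (not_lt.mpr this)
      exact hfun_pos hg (hxH x hx) hn0 hn
    have hzero : ∀ x ∈ s', Ψ x = 0 := by
      intro x hx
      rw [hs'def, Finset.mem_filter] at hx
      rw [hΨeq x (hxH x hx.1)]
      exact hfun_zero_of_inf hg (hxH x hx.1) (hs x hx.1) hx.2
    -- choose epsilon
    set T : Finset G := s \ s' with hTdef
    have hεex : ∃ ε > (0 : ℝ), ∀ x ∈ T, ε * (|θ x| + 1) ≤ Ψ x := by
      rcases T.eq_empty_or_nonempty with hT | hT
      · exact ⟨1, one_pos, by simp [hT]⟩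
      · refine ⟨T.inf' hT (fun x => Ψ x / (|θ x| + 1)), ?_, ?_⟩
        · rw [gt_iff_lt, Finset.lt_inf'_iff]
          intro x hx
          rw [hTdef, Finset.mem_sdiff] at hx
          exact div_pos (hpos' x hx.1 hx.2) (by positivity)
        · intro x hx
          have h1 : T.inf' hT (fun x => Ψ x / (|θ x| + 1)) ≤ Ψ x / (|θ x| + 1) :=
            Finset.inf'_le _ hx
          rw [← le_div_iff₀ (by positivity)]
          exact h1
    obtain ⟨ε, hε0, hε⟩ := hεex
    refine ⟨Ψ + (AddMonoidHom.mk' (fun r => ε * r) (fun a b => by ring)).comp θ, ?_⟩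
    intro x hx
    simp only [AddMonoidHom.add_apply, AddMonoidHom.coe_comp, Function.comp_apply,
      AddMonoidHom.mk'_apply]
    by_cases hx' : x ∈ s'
    · rw [hzero x hx']
      have := hθ x hx'
      nlinarith
    · have h1 := hpos' x hx hx'
      have h2 := hε x (Finset.mem_sdiff.mpr ⟨hx, hx'⟩)
      have h3 := neg_abs_le (θ x)
      nlinarith

end Holder

/-- An *order* on an (additively written) abelian group `Γ` is a subset `P ⊆ Γ` with
`P + P ⊆ P`, `P ∩ (−P) = {0}`, and `P ∪ (−P) = Γ`. -/
def IsOrder {Γ : Type*} [AddCommGroup Γ] (P : Set Γ) : Prop :=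
  (∀ a ∈ P, ∀ b ∈ P, a + b ∈ P) ∧
  (P ∩ {x | -x ∈ P} = {0}) ∧
  (P ∪ {x | -x ∈ P} = Set.univ)

/-- The signum function of an order `P`: `sgn_P(χ) = 1` if `χ ∈ P \ {0}`, `sgn_P(0) = 0`,
and `sgn_P(χ) = −1` if `χ ∈ (−P) \ {0}`. -/
noncomputable def sgnOrder {Γ : Type*} [AddCommGroup Γ] (P : Set Γ) (x : Γ) : ℝ := by
  classical exact if x = 0 then 0 else if x ∈ P then 1 else -1

/-- An order `P` on an abelian group induces a linear ordered group structure. -/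
noncomputable def IsOrder.toLinearOrder {Γ : Type*} [inst : AddCommGroup Γ]
    {P : Set Γ} (hP : IsOrder P) : LinearOrder Γ :=
  have h0 : (0 : Γ) ∈ P := by
    rcases (Set.eq_univ_iff_forall.mp hP.2.2 0 : (0:Γ) ∈ P ∪ {x | -x ∈ P}) with h | h
    · exact h
    · simpa using h
  { le := fun a b => b - a ∈ P
    le_refl := fun a => by simpa using h0
    le_trans := fun a b c hab hbc => by
      have := hP.1 _ hbc _ hab
      simpa [sub_add_sub_cancel] using this
    le_antisymm := fun a b hab hba => by
      have hmem : b - a ∈ P ∩ {x | -x ∈ P} := ⟨hab, by simpa [neg_sub] using hba⟩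
      rw [hP.2.1] at hmem
      exact (sub_eq_zero.mp hmem).symm
    le_total := fun a b => by
      rcases (Set.eq_univ_iff_forall.mp hP.2.2 (b - a) : b - a ∈ P ∪ {x | -x ∈ P}) with h | h
      · exact Or.inl h
      · exact Or.inr (by simpa [neg_sub] using h)
    toDecidableLE := Classical.decRel _ }

theorem IsOrder.isOrderedAddMonoid {Γ : Type*} [AddCommGroup Γ]
    {P : Set Γ} (hP : IsOrder P) :
    @IsOrderedAddMonoid Γ _ hP.toLinearOrder.toPartialOrder.toPreorder :=
  @IsOrderedAddMonoid.mk Γ _ hP.toLinearOrder.toPartialOrder.toPreorder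
    (fun a b hab c => by have h : b - a ∈ P := hab; show _ - _ ∈ P; simpa using h)
    (fun a b hab c => by have h : b - a ∈ P := hab; show _ - _ ∈ P; simpa using h)

/-- For every order `P` on an abelian group `Γ` and every finite subset `F ⊆ Γ` there is a
group homomorphism `ψ : Γ → ℝ` such that `sgn_P(χ) = sgn(ψ(χ))` for all `χ ∈ F`. -/
theorem order_separation {Γ : Type*} [AddCommGroup Γ] (P : Set Γ) (hP : IsOrder P)
    (F : Finset Γ) :
    ∃ ψ : Γ →+ ℝ, ∀ χ ∈ F, sgnOrder P χ = Real.sign (ψ χ) := by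
  classical
  letI : LinearOrder Γ := hP.toLinearOrder
  haveI : IsOrderedAddMonoid Γ := hP.isOrderedAddMonoid
  have hle : ∀ a : Γ, 0 ≤ a ↔ a ∈ P := fun a => by
    show a - 0 ∈ P ↔ a ∈ P
    rw [sub_zero]
  set s : Finset Γ := (F.filter (fun χ => χ ≠ 0)).image (fun χ => |χ|) with hsdef
  have hs : ∀ x ∈ s, 0 < x := by
    intro x hx
    rw [hsdef, Finset.mem_image] at hx
    obtain ⟨χ, hχ, rfl⟩ := hx
    exact abs_pos.mpr (Finset.mem_filter.mp hχ).2
  obtain ⟨ψ, hψ⟩ := exists_pos_addMonoidHom s hs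
  refine ⟨ψ, fun χ hχ => ?_⟩
  by_cases h0 : χ = 0
  · subst h0
    simp [sgnOrder, map_zero, Real.sign_zero]
  · have habs : |χ| ∈ s := by
      rw [hsdef]
      exact Finset.mem_image.mpr ⟨χ, Finset.mem_filter.mpr ⟨hχ, h0⟩, rfl⟩
    have hpos := hψ _ habs
    rcases lt_or_gt_of_ne h0 with hlt | hgt
    · rw [abs_of_neg hlt, map_neg] at hpos
      have hψχ : ψ χ < 0 := by linarith
      have hnP : χ ∉ P := fun hmem => absurd hlt (not_lt.mpr ((hle χ).mpr hmem))
      simp only [sgnOrder, if_neg h0, if_neg hnP, Real.sign_of_neg hψχ]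
    · rw [abs_of_pos hgt] at hpos
      have hmem : χ ∈ P := (hle χ).mp hgt.le
      simp only [sgnOrder, if_neg h0, if_pos hmem, Real.sign_of_pos hpos]
end

section
/- Let X be a complex Banach space, let G be a compact Hausdorff abelian group with dual group Γ, let P be an order on Γ, and let f = ∑_{χ∈F} a_χ χ be an X-valued trigonometric polynomial (F ⊆ Γ finite, a_χ ∈ X). Suppose ψ : Γ → ℝ is a group homomorphism with sgn(ψ(χ)) = sgn_P(χ) for all χ ∈ F, and φ : ℝ → G is a continuous homomorphism adjoint to ψ, i.e. χ(φ(t)) = e^{iψ(χ)t} for all χ ∈ Γ and t ∈ ℝ. Then for every x ∈ G, the limit as n → ∞ of (1/π) ∫_{1/n ≤ |t| ≤ n} f(x − φ(t))/t dt equals T_P f(x). -/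
open Filter MeasureTheory Complex

/-- `Γ`, via the injection `e`, is the dual group of `G`: every `e χ` is a continuous
character of `G` with values in the unit circle of `ℂ`, `e` is an injective homomorphism,
and every continuous character of `G` is of the form `e χ`. -/
structure IsDualGroup (G : Type*) [AddCommGroup G] [TopologicalSpace G]
    {Γ : Type*} [AddCommGroup Γ] (e : Γ → G → ℂ) : Prop where
  continuous : ∀ χ, Continuous (e χ)
  norm_one : ∀ χ x, ‖e χ x‖ = 1
  char_add : ∀ χ x y, e χ (x + y) = e χ x * e χ y
  map_add : ∀ χ χ' x, e (χ + χ') x = e χ x * e χ' x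
  injective : Function.Injective e
  surjective : ∀ c : G → ℂ, Continuous c → (∀ x, ‖c x‖ = 1) →
    (∀ x y, c (x + y) = c x * c y) → ∃ χ, e χ = c

/-- The truncated domain `{t ∈ ℝ : 1/n ≤ |t| ≤ n}`. -/
def truncSet (n : ℕ) : Set ℝ := {t : ℝ | 1 / (n : ℝ) ≤ |t| ∧ |t| ≤ (n : ℝ)}

section Aux
open Set Real


noncomputable def sinc (x : ℝ) : ℝ := Real.sin x / x

lemma abs_sinc_le_one (x : ℝ) : |_root_.sinc x| ≤ 1 := by
  rcases eq_or_ne x 0 with rfl | hx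
  · simp [_root_.sinc]
  · rw [_root_.sinc, _root_.abs_div]
    rw [div_le_one (abs_pos.mpr hx)]
    exact Real.abs_sin_le_abs

lemma measurable_sinc : Measurable _root_.sinc :=
  Real.measurable_sin.div measurable_id

lemma intervalIntegrable_sinc (a b : ℝ) : IntervalIntegrable _root_.sinc MeasureTheory.volume a b := by
  apply IntervalIntegrable.mono_fun' (g := fun _ => (1:ℝ))
  · exact intervalIntegrable_const
  · exact measurable_sinc.aestronglyMeasurable
  · exact Filter.Eventually.of_forall fun x => by simpa using _root_.abs_sinc_le_one x

noncomputable def Dsin (b : ℝ) : ℝ := ∫ x in (0:ℝ)..b, _root_.sinc x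

lemma continuous_Dsin : Continuous Dsin :=
  intervalIntegral.continuous_primitive intervalIntegrable_sinc 0

lemma Dsin_zero : Dsin 0 = 0 := by simp [Dsin]

lemma integral_exp_neg_mul_Ioi {x : ℝ} (hx : 0 < x) :
    ∫ t in Ioi (0:ℝ), Real.exp (-(x * t)) = 1 / x := by
  have h : ∫ t in Ioi (0:ℝ), Real.exp (-(x * t)) = 0 - (-Real.exp (-(x*0)) / x) := by
    apply integral_Ioi_of_hasDerivAt_of_tendsto'
      (f := fun t => -Real.exp (-(x*t)) / x)
    · intro t _
      have h1 : HasDerivAt (fun t : ℝ => -(x*t)) (-x) t := by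
        have := ((hasDerivAt_id' t).const_mul x).neg; rw [mul_one] at this; exact this
      have h2 := (h1.exp).neg.div_const x
      refine h2.congr_deriv ?_
      field_simp
    · simpa using exp_neg_integrableOn_Ioi 0 hx
    · have hmul : Tendsto (fun t : ℝ => x * t) atTop atTop :=
        Tendsto.const_mul_atTop hx tendsto_id
      have h0 : Tendsto (fun t : ℝ => Real.exp (-(x*t))) atTop (nhds 0) :=
        Real.tendsto_exp_atBot.comp (tendsto_neg_atTop_atBot.comp hmul)
      simpa using (h0.neg).div_const x
  rw [h]; field_simp; simp

lemma integral_exp_sin (t b : ℝ) :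
    ∫ x in (0:ℝ)..b, Real.exp (-(t*x)) * Real.sin x
      = (1 - Real.exp (-(t*b)) * (t * Real.sin b + Real.cos b)) / (1 + t^2) := by
  have hder : ∀ x : ℝ, HasDerivAt
      (fun x => -(Real.exp (-(t*x)) * (t * Real.sin x + Real.cos x)) / (1 + t^2))
      (Real.exp (-(t*x)) * Real.sin x) x := by
    intro x
    have h1 : HasDerivAt (fun x : ℝ => -(t*x)) (-t) x := by
      have := ((hasDerivAt_id' x).const_mul t).neg; rw [mul_one] at this; exact this
    have h2 : HasDerivAt (fun x : ℝ => Real.exp (-(t*x))) (Real.exp (-(t*x)) * (-t)) x :=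
      h1.exp
    have h3 : HasDerivAt (fun x : ℝ => t * Real.sin x + Real.cos x)
        (t * Real.cos x + (-Real.sin x)) x :=
      ((Real.hasDerivAt_sin x).const_mul t).add (Real.hasDerivAt_cos x)
    have h4 := ((h2.mul h3).neg).div_const (1 + t^2)
    refine h4.congr_deriv ?_
    have ht : (1:ℝ) + t^2 ≠ 0 := by positivity
    field_simp
    ring
  rw [intervalIntegral.integral_eq_sub_of_hasDerivAt (fun x _ => hder x)
    (((Real.continuous_exp.comp (continuous_const.mul continuous_id).neg).mul
      Real.continuous_sin).intervalIntegrable 0 b)]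
  rw [Real.sin_zero, Real.cos_zero]
  rw [show -(t*(0:ℝ)) = 0 by ring, Real.exp_zero]
  ring

lemma err_bound (b : ℝ) (t : ℝ) (ht : 0 ≤ t) :
    ‖Real.exp (-(t*b)) * (t * Real.sin b + Real.cos b) / (1+t^2)‖ ≤ 2 * Real.exp (-b*t) := by
  rw [Real.norm_eq_abs, _root_.abs_div, _root_.abs_of_pos (by positivity : (0:ℝ) < 1 + t^2), _root_.abs_mul,
    _root_.abs_of_pos (Real.exp_pos _), div_le_iff₀ (by positivity : (0:ℝ) < 1 + t^2),
    show -(t*b) = -b*t by ring]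
  have h1 : |t * Real.sin b + Real.cos b| ≤ t + 1 := by
    calc |t * Real.sin b + Real.cos b| ≤ |t * Real.sin b| + |Real.cos b| := abs_add_le _ _
    _ ≤ t * 1 + 1 := by
        rw [_root_.abs_mul, _root_.abs_of_nonneg ht]
        exact add_le_add (mul_le_mul_of_nonneg_left (Real.abs_sin_le_one b) ht)
          (Real.abs_cos_le_one b)
    _ = t + 1 := by ring
  have h2 : t + 1 ≤ 2 * (1 + t^2) := by nlinarith [sq_nonneg (t-1)]
  calc Real.exp (-b*t) * |t * Real.sin b + Real.cos b| ≤ Real.exp (-b*t) * (2 * (1+t^2)) :=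
        mul_le_mul_of_nonneg_left (h1.trans h2) (Real.exp_pos _).le
  _ = 2 * Real.exp (-b*t) * (1+t^2) := by ring

lemma integrable_err {b : ℝ} (hb : 0 < b) :
    IntegrableOn (fun t => Real.exp (-(t*b)) * (t * Real.sin b + Real.cos b) / (1+t^2))
      (Ioi (0:ℝ)) := by
  apply Integrable.mono' ((exp_neg_integrableOn_Ioi 0 hb).const_mul 2)
  · apply Continuous.aestronglyMeasurable
    fun_prop (disch := intro t; positivity)
  · filter_upwards [ae_restrict_mem measurableSet_Ioi] with t ht
    exact err_bound b t (le_of_lt ht)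

lemma Dsin_eq {b : ℝ} (hb : 0 < b) :
    Dsin b = π/2 - ∫ t in Ioi (0:ℝ),
      Real.exp (-(t*b)) * (t * Real.sin b + Real.cos b) / (1+t^2) := by
  have key : Dsin b = ∫ t in Ioi (0:ℝ),
      (1 - Real.exp (-(t*b)) * (t * Real.sin b + Real.cos b)) / (1+t^2) := by
    have hswap : ∫ x in Ioc (0:ℝ) b, ∫ t in Ioi (0:ℝ), Real.exp (-(t*x)) * Real.sin x
        = ∫ t in Ioi (0:ℝ), ∫ x in Ioc (0:ℝ) b, Real.exp (-(t*x)) * Real.sin x := by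
      apply MeasureTheory.integral_integral_swap
      have hmeas : AEStronglyMeasurable (fun p : ℝ × ℝ => Real.exp (-(p.2*p.1)) * Real.sin p.1)
          ((volume.restrict (Ioc (0:ℝ) b)).prod (volume.restrict (Ioi (0:ℝ)))) := by
        apply Continuous.aestronglyMeasurable; fun_prop
      refine (MeasureTheory.integrable_prod_iff hmeas).mpr ⟨?_, ?_⟩
      · filter_upwards [ae_restrict_mem measurableSet_Ioc] with x hx
        have := (exp_neg_integrableOn_Ioi 0 hx.1).mul_const (Real.sin x)
        simpa [mul_comm] using this
      · apply MeasureTheory.Integrable.congr (f := fun x => |_root_.sinc x|)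
        · apply Integrable.mono' (integrable_const (1:ℝ))
          · exact measurable_sinc.abs.aestronglyMeasurable
          · exact Filter.Eventually.of_forall fun x => by simpa using _root_.abs_sinc_le_one x
        · filter_upwards [ae_restrict_mem measurableSet_Ioc] with x hx
          have h1 : ∫ t in Ioi (0:ℝ), ‖Real.exp (-(t*x)) * Real.sin x‖
              = ∫ t in Ioi (0:ℝ), Real.exp (-(x*t)) * |Real.sin x| := by
            congr 1; ext t
            rw [norm_mul, Real.norm_eq_abs, Real.norm_eq_abs, _root_.abs_of_pos (Real.exp_pos _),
              show -(t*x) = -(x*t) by ring]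
          rw [eq_comm]
          show (∫ t in Ioi (0:ℝ), ‖Real.exp (-(t*x)) * Real.sin x‖) = |_root_.sinc x|
          rw [h1, MeasureTheory.integral_mul_const, integral_exp_neg_mul_Ioi hx.1,
            _root_.sinc, _root_.abs_div, _root_.abs_of_pos hx.1]
          ring
    have hx_eq : ∫ x in Ioc (0:ℝ) b, _root_.sinc x
        = ∫ x in Ioc (0:ℝ) b, ∫ t in Ioi (0:ℝ), Real.exp (-(t*x)) * Real.sin x := by
      apply setIntegral_congr_fun measurableSet_Ioc
      intro x hx
      dsimp only
      have h1 : ∫ t in Ioi (0:ℝ), Real.exp (-(t*x)) * Real.sin x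
          = (∫ t in Ioi (0:ℝ), Real.exp (-(x*t))) * Real.sin x := by
        rw [← MeasureTheory.integral_mul_const]
        congr 1; ext t; rw [show -(t*x) = -(x*t) by ring]
      rw [h1, integral_exp_neg_mul_Ioi hx.1, _root_.sinc]
      ring
    have ht_eq : ∀ t ∈ Ioi (0:ℝ), ∫ x in Ioc (0:ℝ) b, Real.exp (-(t*x)) * Real.sin x
        = (1 - Real.exp (-(t*b)) * (t * Real.sin b + Real.cos b)) / (1+t^2) := by
      intro t _
      rw [← intervalIntegral.integral_of_le hb.le, integral_exp_sin]
    rw [Dsin, intervalIntegral.integral_of_le hb.le, hx_eq, hswap]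
    exact setIntegral_congr_fun measurableSet_Ioi ht_eq
  rw [key]
  have hsplit : (fun t : ℝ => (1 - Real.exp (-(t*b)) * (t * Real.sin b + Real.cos b)) / (1+t^2))
      = fun t => (1+t^2)⁻¹ - Real.exp (-(t*b)) * (t * Real.sin b + Real.cos b) / (1+t^2) := by
    ext t; rw [sub_div, one_div]
  rw [hsplit,
    MeasureTheory.integral_sub (integrable_inv_one_add_sq.integrableOn) (integrable_err hb),
    integral_Ioi_inv_one_add_sq (i := 0), Real.arctan_zero, sub_zero]

lemma tendsto_Dsin : Tendsto Dsin atTop (nhds (π/2)) := by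
  have hbound : ∀ᶠ b in atTop, ‖Dsin b - π/2‖ ≤ 2/b := by
    filter_upwards [eventually_gt_atTop (0:ℝ)] with b hb
    rw [Dsin_eq hb]
    have h1 : ‖π/2 - (∫ t in Ioi (0:ℝ),
        Real.exp (-(t*b)) * (t * Real.sin b + Real.cos b) / (1+t^2)) - π/2‖
        = ‖∫ t in Ioi (0:ℝ), Real.exp (-(t*b)) * (t * Real.sin b + Real.cos b) / (1+t^2)‖ := by
      rw [show π/2 - (∫ t in Ioi (0:ℝ),
        Real.exp (-(t*b)) * (t * Real.sin b + Real.cos b) / (1+t^2)) - π/2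
        = -(∫ t in Ioi (0:ℝ), Real.exp (-(t*b)) * (t * Real.sin b + Real.cos b) / (1+t^2))
        by ring, norm_neg]
    rw [h1]
    have h2 : ‖∫ t in Ioi (0:ℝ), Real.exp (-(t*b)) * (t * Real.sin b + Real.cos b) / (1+t^2)‖
        ≤ ∫ t in Ioi (0:ℝ), 2 * Real.exp (-b*t) := by
      apply MeasureTheory.norm_integral_le_of_norm_le ((exp_neg_integrableOn_Ioi 0 hb).const_mul 2)
      filter_upwards [ae_restrict_mem measurableSet_Ioi] with t ht
      exact err_bound b t (le_of_lt ht)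
    have h3 : ∫ t in Ioi (0:ℝ), 2 * Real.exp (-b*t) = 2/b := by
      rw [MeasureTheory.integral_const_mul]
      have : ∫ t in Ioi (0:ℝ), Real.exp (-b*t) = 1/b := by
        rw [← integral_exp_neg_mul_Ioi hb]
        congr 1; ext t; rw [neg_mul]
      rw [this]; ring
    rw [← h3]; exact h2
  have h0 : Tendsto (fun b : ℝ => Dsin b - π/2) atTop (nhds 0) := by
    apply squeeze_zero_norm' hbound
    exact Tendsto.div_atTop tendsto_const_nhds tendsto_id
  have := h0.add_const (π/2)
  simpa using this

lemma dirichlet_pos {c : ℝ} (hc : 0 < c) :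
    Tendsto (fun n : ℕ => ∫ x in (1/(n:ℝ))..(n:ℝ), Real.sin (c*x)/x) atTop (nhds (π/2)) := by
  have heq : ∀ n : ℕ, ∫ x in (1/(n:ℝ))..(n:ℝ), Real.sin (c*x)/x
      = Dsin (c*(n:ℝ)) - Dsin (c*(1/(n:ℝ))) := by
    intro n
    have h1 : (fun x : ℝ => Real.sin (c*x)/x) = fun x => c • _root_.sinc (c*x) := by
      ext x
      rcases eq_or_ne x 0 with rfl|hx
      · simp [_root_.sinc]
      · rw [smul_eq_mul, _root_.sinc]; field_simp
    rw [h1, intervalIntegral.integral_smul, intervalIntegral.integral_comp_mul_left _ hc.ne',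
      smul_smul, mul_inv_cancel₀ hc.ne', one_smul,
      ← intervalIntegral.integral_interval_sub_left (intervalIntegrable_sinc 0 (c*(n:ℝ)))
        (intervalIntegrable_sinc 0 (c*(1/(n:ℝ))))]
    rfl
  have h2 : Tendsto (fun n : ℕ => Dsin (c*(n:ℝ))) atTop (nhds (π/2)) :=
    tendsto_Dsin.comp (Tendsto.const_mul_atTop hc tendsto_natCast_atTop_atTop)
  have h3 : Tendsto (fun n : ℕ => Dsin (c*(1/(n:ℝ)))) atTop (nhds 0) := by
    have h4 : Tendsto (fun n : ℕ => c*(1/(n:ℝ))) atTop (nhds 0) := by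
      simpa using tendsto_one_div_atTop_nhds_zero_nat.const_mul c
    have := (continuous_Dsin.tendsto 0).comp h4
    rwa [Dsin_zero] at this
  have := h2.sub h3
  rw [sub_zero] at this
  exact Tendsto.congr (fun n => (heq n).symm) this

lemma dirichlet_seq (c : ℝ) :
    Tendsto (fun n : ℕ => ∫ x in (1/(n:ℝ))..(n:ℝ), Real.sin (c*x)/x) atTop
      (nhds (Real.sign c * (π/2))) := by
  rcases lt_trichotomy c 0 with hc|rfl|hc
  · have h := (dirichlet_pos (neg_pos.mpr hc)).neg
    have heq : ∀ n : ℕ, -∫ x in (1/(n:ℝ))..(n:ℝ), Real.sin ((-c)*x)/x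
        = ∫ x in (1/(n:ℝ))..(n:ℝ), Real.sin (c*x)/x := by
      intro n; rw [← intervalIntegral.integral_neg]
      congr 1; ext x
      rw [neg_mul, Real.sin_neg]; ring
    rw [Real.sign_of_neg hc, show (-1 : ℝ) * (π/2) = -(π/2) by ring]
    exact Tendsto.congr heq h
  · simp only [Real.sign_zero, zero_mul, Real.sin_zero]
    simp only [zero_div, intervalIntegral.integral_zero]
    exact tendsto_const_nhds
  · rw [Real.sign_of_pos hc, one_mul]
    exact dirichlet_pos hc

lemma exp_diff (θ : ℝ) : Complex.exp (-(Complex.I * θ)) - Complex.exp (Complex.I * θ)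
    = ((-2) * Real.sin θ : ℝ) • Complex.I := by
  rw [show -(Complex.I * θ) = ((-θ : ℝ) : ℂ) * Complex.I by push_cast; ring,
      show (Complex.I * (θ:ℝ) : ℂ) = ((θ : ℝ) : ℂ) * Complex.I by push_cast; ring,
      Complex.exp_mul_I, Complex.exp_mul_I, Complex.real_smul]
  push_cast
  rw [Complex.cos_neg, Complex.sin_neg]
  ring

noncomputable def gC (c : ℝ) (t : ℝ) : ℂ :=
  (1 / (Real.pi * t)) • Complex.exp (-(Complex.I * c * t))

lemma gC_add_neg (c t : ℝ) :
    gC c (-t) + gC c t = ((-2) * (Real.sin (c*t) / (Real.pi * t))) • Complex.I := by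
  have h1 : gC c (-t) = (-(1 / (Real.pi * t))) • Complex.exp (Complex.I * (c*t : ℝ)) := by
    rw [gC, show Real.pi * (-t) = -(Real.pi * t) by ring, div_neg]
    congr 1
    push_cast; ring
  have h2 : gC c t = (1 / (Real.pi * t)) • Complex.exp (-(Complex.I * (c*t : ℝ))) := by
    rw [gC]; congr 1; push_cast; ring
  rw [h1, h2, neg_smul, neg_add_eq_sub, ← smul_sub, exp_diff (c*t), smul_smul]
  congr 1
  ring

lemma truncSet_eq {n : ℕ} (hn : 1 ≤ n) :
    truncSet n = Icc (-(n:ℝ)) (-(1/(n:ℝ))) ∪ Icc (1/(n:ℝ)) (n:ℝ) := by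
  have hn0 : 0 < (n:ℝ) := by exact_mod_cast hn
  have hinv : 0 < 1/(n:ℝ) := by positivity
  ext t
  simp only [truncSet, mem_setOf_eq, Set.mem_union, Set.mem_Icc, le_abs, abs_le]
  constructor
  · rintro ⟨h1 | h1, h2, h3⟩
    · right; exact ⟨h1, h3⟩
    · left; exact ⟨h2, by linarith⟩
  · rintro (⟨h1, h2⟩ | ⟨h1, h2⟩)
    · exact ⟨Or.inr (by linarith), h1, by linarith⟩
    · exact ⟨Or.inl h1, by linarith, h2⟩

lemma key_scalar (c : ℝ) :
    Tendsto (fun n : ℕ => ∫ t in truncSet n, gC c t) atTop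
      (nhds (-Complex.I * (Real.sign c : ℂ))) := by
  have hev : ∀ᶠ n : ℕ in atTop, (∫ t in truncSet n, gC c t)
      = ((-2/Real.pi) * ∫ x in (1/(n:ℝ))..(n:ℝ), Real.sin (c*x)/x) • Complex.I := by
    filter_upwards [eventually_ge_atTop 1] with n hn
    have hn0 : (0:ℝ) < n := by exact_mod_cast hn
    have hn1 : (1:ℝ) ≤ n := by exact_mod_cast hn
    have hinv : 0 < 1/(n:ℝ) := by positivity
    have hle : 1/(n:ℝ) ≤ (n:ℝ) := by rw [div_le_iff₀ hn0]; nlinarith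
    have hgcont : ContinuousOn (gC c) {t : ℝ | t ≠ 0} := by
      apply ContinuousOn.fun_smul
      · exact continuousOn_const.div (by fun_prop) (fun t ht => by
          exact mul_ne_zero Real.pi_ne_zero ht)
      · fun_prop
    have hsub1 : Icc (1/(n:ℝ)) (n:ℝ) ⊆ {t : ℝ | t ≠ 0} := fun t ht => by
      have := ht.1; simp only [mem_setOf_eq]; intro h; rw [h] at this; linarith
    have hsub2 : Icc (-(n:ℝ)) (-(1/(n:ℝ))) ⊆ {t : ℝ | t ≠ 0} := fun t ht => by
      have := ht.2; simp only [mem_setOf_eq]; intro h; rw [h] at this; linarith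
    have hint1 : IntegrableOn (gC c) (Icc (1/(n:ℝ)) (n:ℝ)) :=
      (hgcont.mono hsub1).integrableOn_compact isCompact_Icc
    have hint2 : IntegrableOn (gC c) (Icc (-(n:ℝ)) (-(1/(n:ℝ)))) :=
      (hgcont.mono hsub2).integrableOn_compact isCompact_Icc
    have hdisj : Disjoint (Icc (-(n:ℝ)) (-(1/(n:ℝ)))) (Icc (1/(n:ℝ)) (n:ℝ)) := by
      apply Set.disjoint_left.mpr
      rintro t ⟨_, h2⟩ ⟨h3, _⟩
      linarith
    rw [truncSet_eq hn, MeasureTheory.setIntegral_union hdisj measurableSet_Icc hint2 hint1]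
    have hIcc1 : ∫ t in Icc (1/(n:ℝ)) (n:ℝ), gC c t = ∫ x in (1/(n:ℝ))..(n:ℝ), gC c x := by
      rw [MeasureTheory.integral_Icc_eq_integral_Ioc, intervalIntegral.integral_of_le hle]
    have hIcc2 : ∫ t in Icc (-(n:ℝ)) (-(1/(n:ℝ))), gC c t
        = ∫ x in (1/(n:ℝ))..(n:ℝ), gC c (-x) := by
      rw [MeasureTheory.integral_Icc_eq_integral_Ioc,
        ← intervalIntegral.integral_of_le (by linarith : -(n:ℝ) ≤ -(1/(n:ℝ))),
        intervalIntegral.integral_comp_neg]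
    have hcont_neg : ContinuousOn (fun x : ℝ => gC c (-x)) (Set.uIcc (1/(n:ℝ)) (n:ℝ)) := by
      rw [Set.uIcc_of_le hle]
      apply ContinuousOn.comp (hgcont.mono hsub2) continuous_neg.continuousOn
      intro x hx
      simp only [Set.mem_Icc] at hx ⊢
      constructor <;> linarith [hx.1, hx.2]
    rw [hIcc1, hIcc2,
      ← intervalIntegral.integral_add hcont_neg.intervalIntegrable
        (((hgcont.mono hsub1).mono (by rw [Set.uIcc_of_le hle])).intervalIntegrable)]
    have hptwise : ∀ x : ℝ, gC c (-x) + gC c x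
        = ((-2/Real.pi) * (Real.sin (c*x)/x)) • Complex.I := by
      intro x
      rw [gC_add_neg]
      congr 1
      ring
    simp only [hptwise]
    rw [intervalIntegral.integral_smul_const, intervalIntegral.integral_const_mul]
  have hlim := ((dirichlet_seq c).const_mul (-2/Real.pi)).smul_const Complex.I
  have heq : ((-2/Real.pi) * (Real.sign c * (π/2))) • Complex.I
      = -Complex.I * (Real.sign c : ℂ) := by
    rw [show (-2/Real.pi) * (Real.sign c * (π/2)) = -Real.sign c by
      field_simp]
    rw [Complex.real_smul]; push_cast; ring
  rw [heq] at hlim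
  exact hlim.congr' (EventuallyEq.symm hev)

lemma integrableOn_gC (c : ℝ) {n : ℕ} (hn : 1 ≤ n) :
    MeasureTheory.IntegrableOn (gC c) (truncSet n) := by
  have hn0 : (0:ℝ) < n := by exact_mod_cast hn
  have hinv : 0 < 1/(n:ℝ) := by positivity
  have hgcont : ContinuousOn (gC c) {t : ℝ | t ≠ 0} := by
    apply ContinuousOn.fun_smul
    · exact continuousOn_const.div (by fun_prop) (fun t ht => by
        exact mul_ne_zero Real.pi_ne_zero ht)
    · fun_prop
  have hsub1 : Icc (1/(n:ℝ)) (n:ℝ) ⊆ {t : ℝ | t ≠ 0} := fun t ht => by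
    have := ht.1; simp only [mem_setOf_eq]; intro h; rw [h] at this; linarith
  have hsub2 : Icc (-(n:ℝ)) (-(1/(n:ℝ))) ⊆ {t : ℝ | t ≠ 0} := fun t ht => by
    have := ht.2; simp only [mem_setOf_eq]; intro h; rw [h] at this; linarith
  rw [truncSet_eq hn]
  exact MeasureTheory.IntegrableOn.union
    ((hgcont.mono hsub2).integrableOn_compact isCompact_Icc)
    ((hgcont.mono hsub1).integrableOn_compact isCompact_Icc)

end Aux

/-- Let `X` be a complex Banach space, `G` a compact Hausdorff abelian group with dual group
`Γ`, `P` an order on `Γ`, and `f = ∑_{χ∈F} a_χ χ` an `X`-valued trigonometric polynomial.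
If `ψ : Γ → ℝ` is a homomorphism with `sgn(ψ(χ)) = sgn_P(χ)` on `F`, and `φ : ℝ → G` is a
continuous homomorphism adjoint to `ψ` (i.e. `χ(φ(t)) = e^{iψ(χ)t}`), then for every `x ∈ G`,
`(1/π) ∫_{1/n ≤ |t| ≤ n} f(x − φ(t))/t dt → T_P f(x)` as `n → ∞`, where
`T_P f = −i ∑_{χ∈F} sgn_P(χ) a_χ χ`. -/
theorem tendsto_truncated_transfer_eq_conjugate
    {X : Type*} [NormedAddCommGroup X] [NormedSpace ℂ X] [CompleteSpace X]
    {G : Type*} [AddCommGroup G] [TopologicalSpace G] [IsTopologicalAddGroup G]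
    [CompactSpace G] [T2Space G]
    {Γ : Type*} [AddCommGroup Γ] (e : Γ → G → ℂ) (hdual : IsDualGroup G e)
    (P : Set Γ) (hP : IsOrder P)
    (F : Finset Γ) (a : Γ → X)
    (ψ : Γ →+ ℝ) (hψ : ∀ χ ∈ F, Real.sign (ψ χ) = sgnOrder P χ)
    (φ : ℝ →+ G) (hφ_cont : Continuous φ)
    (hadj : ∀ (χ : Γ) (t : ℝ), e χ (φ t) = Complex.exp (Complex.I * (ψ χ) * t))
    (x : G) :
    Tendsto
      (fun n : ℕ =>
        ∫ t in truncSet n, (1 / (Real.pi * t)) • (∑ χ ∈ F, e χ (x - φ t) • a χ))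
      atTop
      (nhds (∑ χ ∈ F, (-Complex.I * (sgnOrder P χ : ℂ) * e χ x) • a χ)) := by
  have hchar : ∀ (χ : Γ) (t : ℝ), e χ (x - φ t)
      = e χ x * Complex.exp (-(Complex.I * (ψ χ) * t)) := by
    intro χ t
    have h1 : e χ (x - φ t) * e χ (φ t) = e χ x := by
      rw [← hdual.char_add, sub_add_cancel]
    rw [← h1, hadj, mul_assoc, ← Complex.exp_add]
    simp
  have hpt : ∀ t : ℝ, (1 / (Real.pi * t)) • (∑ χ ∈ F, e χ (x - φ t) • a χ)
      = ∑ χ ∈ F, (e χ x * gC (ψ χ) t) • a χ := by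
    intro t
    rw [Finset.smul_sum]
    refine Finset.sum_congr rfl fun χ _ => ?_
    rw [← smul_assoc]
    congr 1
    rw [hchar, gC]
    rw [Complex.real_smul, Complex.real_smul]
    push_cast
    ring
  have hev : ∀ᶠ n : ℕ in atTop,
      (∫ t in truncSet n, (1 / (Real.pi * t)) • ∑ χ ∈ F, e χ (x - φ t) • a χ)
      = ∑ χ ∈ F, (e χ x * ∫ t in truncSet n, gC (ψ χ) t) • a χ := by
    filter_upwards [eventually_ge_atTop 1] with n hn
    simp only [hpt]
    rw [MeasureTheory.integral_finset_sum _ (fun χ _ =>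
      ((integrableOn_gC (ψ χ) hn).const_mul (e χ x)).smul_const (a χ))]
    refine Finset.sum_congr rfl fun χ _ => ?_
    rw [integral_smul_const]
    congr 1
    simp only [← smul_eq_mul, MeasureTheory.integral_smul]
  have hlim : Tendsto (fun n : ℕ => ∑ χ ∈ F, (e χ x * ∫ t in truncSet n, gC (ψ χ) t) • a χ)
      atTop (nhds (∑ χ ∈ F, (-Complex.I * (sgnOrder P χ : ℂ) * e χ x) • a χ)) := by
    apply tendsto_finset_sum
    intro χ hχ
    have h := ((key_scalar (ψ χ)).const_mul (e χ x)).smul_const (a χ)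
    have heq : e χ x * (-Complex.I * (Real.sign (ψ χ) : ℂ))
        = -Complex.I * (sgnOrder P χ : ℂ) * e χ x := by
      rw [hψ χ hχ]; ring
    rwa [heq] at h
  exact hlim.congr' (Filter.EventuallyEq.symm hev)
end

section
/- Let X be a complex Banach space, 1 < p < ∞, and suppose there is a constant N such that ‖H_n g‖_{L^p(ℝ,X)} ≤ N ‖g‖_{L^p(ℝ,X)} for all n ∈ ℕ and all g ∈ L^p(ℝ,X), where H_n is the truncated Hilbert transform. Let G be a compact Hausdorff abelian group with normalized Haar measure and let φ : ℝ → G be a continuous group homomorphism. Then for every n ∈ ℕ and every X-valued trigonometric polynomial f on G, the function x ↦ (1/π) ∫_{1/n ≤ |t| ≤ n} f(x − φ(t))/t dt satisfies ‖x ↦ (1/π) ∫_{1/n ≤ |t| ≤ n} f(x − φ(t))/t dt‖_{L^p(G,X)} ≤ N ‖f‖_{L^p(G,X)}. -/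
open Filter MeasureTheory Complex
open scoped ENNReal

/-- The truncated Hilbert transform `H_n g (t) = (1/π) ∫_{1/n ≤ |s| ≤ n} g(t−s)/s ds`
of an `X`-valued function `g` on `ℝ` (Bochner integral). -/
noncomputable def truncHilbert {X : Type*} [NormedAddCommGroup X] [NormedSpace ℂ X]
    (n : ℕ) (g : ℝ → X) (t : ℝ) : X :=
  ∫ s in truncSet n, (1 / (Real.pi * s)) • g (t - s)

lemma measurableSet_truncSet (n : ℕ) : MeasurableSet (truncSet n) := by
  have h : truncSet n = (fun t : ℝ => |t|) ⁻¹' Set.Icc (1/(n:ℝ)) n := by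
    ext t; simp [truncSet, Set.mem_Icc]
  rw [h]
  exact continuous_abs.measurable measurableSet_Icc

lemma volume_truncSet_lt_top (n : ℕ) : volume (truncSet n) < ⊤ := by
  have hsub : truncSet n ⊆ Set.Icc (-(n:ℝ)) n := fun t ht => abs_le.mp ht.2
  exact lt_of_le_of_lt (measure_mono hsub)
    (by rw [Real.volume_Icc]; exact ENNReal.ofReal_lt_top)

lemma kernel_bound {n : ℕ} {t : ℝ} (ht : t ∈ truncSet n) :
    |1/(Real.pi * t)| ≤ n / Real.pi := by
  obtain ⟨h1, h2⟩ := ht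
  have hπ := Real.pi_pos
  rcases eq_or_ne t 0 with rfl | h0
  · rw [mul_zero, div_zero, abs_zero]
    positivity
  · have habs : 0 < |t| := abs_pos.mpr h0
    have hn : 0 < (n:ℝ) := by
      rcases Nat.eq_zero_or_pos n with rfl | hn
      · exfalso; simp only [Nat.cast_zero] at h2
        exact absurd (le_antisymm h2 habs.le) habs.ne'
      · exact_mod_cast hn
    have h1' : 1 ≤ |t| * n := (div_le_iff₀ hn).mp h1
    rw [abs_div, abs_one, abs_mul, abs_of_pos hπ,
      div_le_div_iff₀ (by positivity) hπ]
    nlinarith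


/-- Let `X` be a complex Banach space, `1 < p < ∞`, and suppose the truncated Hilbert
transforms are uniformly bounded on `L^p(ℝ, X)` by a constant `N`.  Let `G` be a compact
Hausdorff abelian group with normalized Haar measure `μ` and `φ : ℝ → G` a continuous
homomorphism.  Then for every `n ∈ ℕ` and every `X`-valued trigonometric polynomial
`f = ∑_{χ∈F} a_χ χ` on `G`, the transferred truncated operator satisfies
`‖x ↦ (1/π) ∫_{1/n ≤ |t| ≤ n} f(x − φ(t))/t dt‖_{L^p(G,X)} ≤ N ‖f‖_{L^p(G,X)}`. -/
theorem transference_truncated_hilbert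
    {X : Type*} [NormedAddCommGroup X] [NormedSpace ℂ X] [CompleteSpace X]
    (p : ℝ≥0∞) (hp1 : 1 < p) (hp_top : p ≠ ⊤) (N : ℝ)
    (hHT : ∀ (n : ℕ) (g : ℝ → X), MemLp g p (volume : Measure ℝ) →
      eLpNorm (truncHilbert n g) p (volume : Measure ℝ) ≤
        ENNReal.ofReal N * eLpNorm g p (volume : Measure ℝ))
    {G : Type*} [AddCommGroup G] [TopologicalSpace G] [IsTopologicalAddGroup G]
    [CompactSpace G] [T2Space G] [MeasurableSpace G] [BorelSpace G]
    (μ : Measure G) [μ.IsAddHaarMeasure] [IsProbabilityMeasure μ]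
    (φ : ℝ →+ G) (hφ_cont : Continuous φ)
    (F : Finset (G → ℂ))
    (hF : ∀ c ∈ F, Continuous c ∧ (∀ x, ‖c x‖ = 1) ∧ ∀ x y, c (x + y) = c x * c y)
    (a : (G → ℂ) → X) (n : ℕ) :
    eLpNorm
      (fun x : G => ∫ t in truncSet n, (1 / (Real.pi * t)) • (∑ c ∈ F, c (x - φ t) • a c))
      p μ ≤
    ENNReal.ofReal N * eLpNorm (fun x : G => ∑ c ∈ F, c x • a c) p μ := by
  classical
  have hp0 : p ≠ 0 := (lt_trans zero_lt_one hp1).ne'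
  set q : ℝ := p.toReal with hq_def
  have hq : 0 < q := ENNReal.toReal_pos hp0 hp_top
  have hSm := measurableSet_truncSet n
  set f₀ : G → X := fun x => ∑ c ∈ F, c x • a c with hf₀_def
  set k : ℝ → ℝ := fun t => 1/(Real.pi * t) with hk_def
  have hk_meas : Measurable k := measurable_const.div (measurable_const.mul measurable_id)
  set M : ℝ := ∑ c ∈ F, ‖a c‖ with hM_def
  have hf₀_bd : ∀ y, ‖f₀ y‖ ≤ M := by
    intro y
    refine (norm_sum_le _ _).trans ?_
    apply Finset.sum_le_sum
    intro c hc
    rw [norm_smul, (hF c hc).2.1]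
    simp
  have hf₀_cont : Continuous f₀ :=
    continuous_finset_sum _ (fun c hc => ((hF c hc).1).smul continuous_const)
  set lam : (G → ℂ) → ℂ := fun c => ∫ t in truncSet n, ((k t : ℝ) : ℂ) * c (-(φ t))
    with hlam_def
  set Tf : G → X := fun y => ∫ t in truncSet n, k t • f₀ (y - φ t) with hTf_def
  -- integrability of the summands
  have hload : ∀ c ∈ F, ∀ y : G,
      IntegrableOn (fun t => k t • (c (y - φ t) • a c)) (truncSet n) volume := by
    intro c hc y
    apply Measure.integrableOn_of_bounded (M := (n / Real.pi) * ‖a c‖)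
      (volume_truncSet_lt_top n).ne
    · exact (hk_meas.stronglyMeasurable.smul
        ((((hF c hc).1.comp (continuous_const.sub hφ_cont)).smul
          continuous_const).stronglyMeasurable)).aestronglyMeasurable
    · rw [ae_restrict_iff' hSm]
      apply ae_of_all
      intro t ht
      rw [norm_smul, norm_smul, (hF c hc).2.1]
      simp only [Real.norm_eq_abs, one_mul]
      exact mul_le_mul_of_nonneg_right (kernel_bound ht) (norm_nonneg _)
  -- the transferred operator is a trigonometric polynomial
  have hTf : ∀ y, Tf y = ∑ c ∈ F, (c y * lam c) • a c := by
    intro y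
    have e1 : ∀ (r : ℝ) (z : ℂ) (v : X), r • (z • v) = ((r:ℂ) * z) • v := by
      intro r z v
      rw [← Complex.coe_smul, smul_smul]
    calc Tf y = ∫ t in truncSet n, ∑ c ∈ F, k t • (c (y - φ t) • a c) := by
          rw [hTf_def]; simp only [hf₀_def, Finset.smul_sum]
      _ = ∑ c ∈ F, ∫ t in truncSet n, k t • (c (y - φ t) • a c) :=
          integral_finset_sum F (fun c hc => hload c hc y)
      _ = ∑ c ∈ F, (c y * lam c) • a c := by
          apply Finset.sum_congr rfl
          intro c hc
          calc (∫ t in truncSet n, k t • (c (y - φ t) • a c))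
              = ∫ t in truncSet n, ((k t : ℂ) * c (y - φ t)) • a c := by
                simp only [e1]
            _ = (∫ t in truncSet n, (k t : ℂ) * c (y - φ t)) • a c :=
                integral_smul_const _ _
            _ = (c y * lam c) • a c := by
                congr 1
                have e2 : ∀ t : ℝ, (k t : ℂ) * c (y - φ t)
                    = c y * ((k t : ℂ) * c (-(φ t))) := by
                  intro t
                  rw [sub_eq_add_neg, (hF c hc).2.2]
                  ring
                simp only [e2]
                rw [hlam_def]
                exact integral_const_mul _ _
  have hshift : ∀ (c : G → ℂ), c ∈ F → ∀ (x : G) (s : ℝ), c (x + φ s) = c x * c (φ s) :=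
    fun c hc x s => (hF c hc).2.2 x (φ s)
  -- product-measurability of the shifted polynomials
  have hWsm : ∀ (β : (G → ℂ) → ℂ),
      Measurable (fun z : G × ℝ =>
        ((‖∑ c ∈ F, ((c z.1 * c (φ z.2)) * β c) • a c‖₊ : ℝ≥0∞)) ^ q) := by
    intro β
    have h1 : StronglyMeasurable
        (fun z : G × ℝ => ∑ c ∈ F, ((c z.1 * c (φ z.2)) * β c) • a c) := by
      apply Finset.stronglyMeasurable_fun_sum
      intro c hc
      have hm : Measurable (fun z : G × ℝ => (c z.1 * c (φ z.2)) * β c) :=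
        (((hF c hc).1.measurable.comp measurable_fst).mul
          (((hF c hc).1.comp hφ_cont).measurable.comp measurable_snd)).mul measurable_const
      exact (continuous_id.smul (continuous_const : Continuous fun _ : ℂ => a c)
        ).comp_stronglyMeasurable hm.stronglyMeasurable
    exact ENNReal.continuous_rpow_const.measurable.comp h1.enorm
  set I := ∫⁻ x, (‖Tf x‖₊ : ℝ≥0∞) ^ q ∂μ with hI_def
  set J := ∫⁻ x, (‖f₀ x‖₊ : ℝ≥0∞) ^ q ∂μ with hJ_def
  set C := (ENNReal.ofReal N) ^ q with hC_def
  have hC_ne_top : C ≠ ⊤ := (ENNReal.rpow_lt_top_of_nonneg hq.le ENNReal.ofReal_ne_top).ne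
  have hJ_ne_top : J ≠ ⊤ := by
    have hb : ∀ x, (‖f₀ x‖₊ : ℝ≥0∞) ^ q ≤ (ENNReal.ofReal M) ^ q := by
      intro x
      apply ENNReal.rpow_le_rpow _ hq.le
      rw [show ((‖f₀ x‖₊ : ℝ≥0∞)) = ENNReal.ofReal ‖f₀ x‖ from (ofReal_norm _).symm]
      exact ENNReal.ofReal_le_ofReal (hf₀_bd x)
    have hJlt : J < ⊤ := calc
      J ≤ ∫⁻ _, (ENNReal.ofReal M) ^ q ∂μ := lintegral_mono hb
      _ = (ENNReal.ofReal M) ^ q := by simp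
      _ < ⊤ := ENNReal.rpow_lt_top_of_nonneg hq.le ENNReal.ofReal_ne_top
    exact hJlt.ne
  -- L^q-norm identification
  have hq_pow : ∀ (g : ℝ → X), (eLpNorm g p volume) ^ q = ∫⁻ u, (‖g u‖₊ : ℝ≥0∞) ^ q := by
    intro g
    rw [eLpNorm_eq_lintegral_rpow_enorm_toReal hp0 hp_top, ← ENNReal.rpow_mul, one_div,
      inv_mul_cancel₀ hq.ne', ENNReal.rpow_one]
    rfl
  -- the inner (fixed x) estimate
  have inner : ∀ (x : G) (m : ℕ),
      (∫⁻ s in Set.Icc (-(m:ℝ)) m, (‖Tf (x + φ s)‖₊ : ℝ≥0∞) ^ q)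
        ≤ C * ∫⁻ u in Set.Icc (-((m:ℝ)+n)) ((m:ℝ)+n), (‖f₀ (x + φ u)‖₊ : ℝ≥0∞) ^ q := by
    intro x m
    set h : ℝ → X :=
      (Set.Icc (-((m:ℝ)+n)) ((m:ℝ)+n)).indicator (fun u => f₀ (x + φ u)) with hh_def
    have hmemh : MemLp h p volume := by
      constructor
      · exact ((hf₀_cont.comp (continuous_const.add hφ_cont)).aestronglyMeasurable).indicator
          measurableSet_Icc
      · rw [eLpNorm_indicator_eq_eLpNorm_restrict measurableSet_Icc]
        refine lt_of_le_of_lt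
          (eLpNorm_le_of_ae_bound (C := M) (ae_of_all _ fun u => hf₀_bd _)) ?_
        rw [Measure.restrict_apply_univ, Real.volume_Icc]
        exact ENNReal.mul_lt_top
          (ENNReal.rpow_lt_top_of_nonneg (by positivity) ENNReal.ofReal_ne_top)
          ENNReal.ofReal_lt_top
    have hid : ∀ s ∈ Set.Icc (-(m:ℝ)) m, Tf (x + φ s) = truncHilbert n h s := by
      intro s hs
      rw [hTf_def, truncHilbert]
      apply setIntegral_congr_fun hSm
      intro t ht
      have ht2 := abs_le.mp ht.2
      obtain ⟨hs1, hs2⟩ := hs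
      have hst : s - t ∈ Set.Icc (-((m:ℝ)+n)) ((m:ℝ)+n) := by
        constructor <;> [linarith [ht2.1, ht2.2]; linarith [ht2.1, ht2.2]]
      simp only [hh_def, Set.indicator_of_mem hst]
      congr 1
      rw [map_sub, add_sub_assoc]
    calc (∫⁻ s in Set.Icc (-(m:ℝ)) m, (‖Tf (x + φ s)‖₊ : ℝ≥0∞) ^ q)
        = ∫⁻ s in Set.Icc (-(m:ℝ)) m, (‖truncHilbert n h s‖₊ : ℝ≥0∞) ^ q :=
          setLIntegral_congr_fun measurableSet_Icc
            (fun s hs => by rw [hid s hs])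
      _ ≤ ∫⁻ s, (‖truncHilbert n h s‖₊ : ℝ≥0∞) ^ q :=
          setLIntegral_le_lintegral _ _
      _ = (eLpNorm (truncHilbert n h) p volume) ^ q := (hq_pow _).symm
      _ ≤ (ENNReal.ofReal N * eLpNorm h p volume) ^ q :=
          ENNReal.rpow_le_rpow (hHT n h hmemh) hq.le
      _ = C * (eLpNorm h p volume) ^ q := by
          rw [ENNReal.mul_rpow_of_nonneg _ _ hq.le, hC_def]
      _ = C * ∫⁻ u, (‖h u‖₊ : ℝ≥0∞) ^ q := by rw [hq_pow]
      _ = C * ∫⁻ u in Set.Icc (-((m:ℝ)+n)) ((m:ℝ)+n), (‖f₀ (x + φ u)‖₊ : ℝ≥0∞) ^ q := by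
          congr 1
          rw [← lintegral_indicator measurableSet_Icc]
          apply lintegral_congr
          intro u
          by_cases hu : u ∈ Set.Icc (-((m:ℝ)+n)) ((m:ℝ)+n)
          · simp only [hh_def, Set.indicator_of_mem hu]
          · simp only [hh_def, Set.indicator_of_notMem hu, nnnorm_zero, ENNReal.coe_zero,
              ENNReal.zero_rpow_of_pos hq]
  -- the key inequality
  have key : ∀ m : ℕ,
      I * ENNReal.ofReal (2*(m:ℝ)) ≤ C * J * ENNReal.ofReal (2*((m:ℝ)+n)) := by
    intro m
    have hIcc1 : volume (Set.Icc (-(m:ℝ)) m) = ENNReal.ofReal (2*(m:ℝ)) := by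
      rw [Real.volume_Icc]; ring_nf
    have hIcc2 : volume (Set.Icc (-((m:ℝ)+n)) ((m:ℝ)+n)) = ENNReal.ofReal (2*((m:ℝ)+n)) := by
      rw [Real.volume_Icc]; ring_nf
    have hswap1 : AEMeasurable
        (Function.uncurry fun (s : ℝ) (x : G) => (‖Tf (x + φ s)‖₊ : ℝ≥0∞) ^ q)
        ((volume.restrict (Set.Icc (-(m:ℝ)) m)).prod μ) := by
      have he : (Function.uncurry fun (s : ℝ) (x : G) => (‖Tf (x + φ s)‖₊ : ℝ≥0∞) ^ q)
          = (fun z : G × ℝ =>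
              ((‖∑ c ∈ F, ((c z.1 * c (φ z.2)) * lam c) • a c‖₊ : ℝ≥0∞)) ^ q) ∘ Prod.swap := by
        funext z
        simp only [Function.uncurry, Function.comp_apply, Prod.swap]
        rw [hTf]
        have hsum : ∑ c ∈ F, (c (z.2 + φ z.1) * lam c) • a c
            = ∑ c ∈ F, ((c z.2 * c (φ z.1)) * lam c) • a c :=
          Finset.sum_congr rfl (fun c hc => by rw [hshift c hc])
        rw [hsum]
      rw [he]
      exact ((hWsm lam).comp measurable_swap).aemeasurable
    have hswap2 : AEMeasurable
        (Function.uncurry fun (x : G) (u : ℝ) => (‖f₀ (x + φ u)‖₊ : ℝ≥0∞) ^ q)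
        (μ.prod (volume.restrict (Set.Icc (-((m:ℝ)+n)) ((m:ℝ)+n)))) := by
      have he : (Function.uncurry fun (x : G) (u : ℝ) => (‖f₀ (x + φ u)‖₊ : ℝ≥0∞) ^ q)
          = (fun z : G × ℝ =>
              ((‖∑ c ∈ F, ((c z.1 * c (φ z.2)) * (1:ℂ)) • a c‖₊ : ℝ≥0∞)) ^ q) := by
        funext z
        simp only [Function.uncurry, mul_one, hf₀_def]
        have hsum : ∑ c ∈ F, c (z.1 + φ z.2) • a c
            = ∑ c ∈ F, (c z.1 * c (φ z.2)) • a c :=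
          Finset.sum_congr rfl (fun c hc => by rw [hshift c hc])
        rw [hsum]
      rw [he]
      exact (hWsm (fun _ => 1)).aemeasurable
    calc I * ENNReal.ofReal (2*(m:ℝ))
        = ∫⁻ _ in Set.Icc (-(m:ℝ)) m, I := by rw [setLIntegral_const, hIcc1]
      _ = ∫⁻ s in Set.Icc (-(m:ℝ)) m, ∫⁻ x, (‖Tf (x + φ s)‖₊ : ℝ≥0∞) ^ q ∂μ := by
          apply lintegral_congr
          intro s
          rw [hI_def]
          exact (lintegral_add_right_eq_self (fun x => (‖Tf x‖₊ : ℝ≥0∞) ^ q) (φ s)).symm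
      _ = ∫⁻ x, (∫⁻ s in Set.Icc (-(m:ℝ)) m, (‖Tf (x + φ s)‖₊ : ℝ≥0∞) ^ q) ∂μ :=
          lintegral_lintegral_swap hswap1
      _ ≤ ∫⁻ x, (C * ∫⁻ u in Set.Icc (-((m:ℝ)+n)) ((m:ℝ)+n),
            (‖f₀ (x + φ u)‖₊ : ℝ≥0∞) ^ q) ∂μ := lintegral_mono fun x => inner x m
      _ = C * ∫⁻ x, (∫⁻ u in Set.Icc (-((m:ℝ)+n)) ((m:ℝ)+n),
            (‖f₀ (x + φ u)‖₊ : ℝ≥0∞) ^ q) ∂μ := lintegral_const_mul' _ _ hC_ne_top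
      _ = C * ∫⁻ u in Set.Icc (-((m:ℝ)+n)) ((m:ℝ)+n),
            (∫⁻ x, (‖f₀ (x + φ u)‖₊ : ℝ≥0∞) ^ q ∂μ) := by
          rw [lintegral_lintegral_swap hswap2]
      _ = C * ∫⁻ _ in Set.Icc (-((m:ℝ)+n)) ((m:ℝ)+n), J := by
          congr 1
          apply lintegral_congr
          intro u
          rw [hJ_def]
          exact lintegral_add_right_eq_self (fun x => (‖f₀ x‖₊ : ℝ≥0∞) ^ q) (φ u)
      _ = C * J * ENNReal.ofReal (2*((m:ℝ)+n)) := by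
          rw [setLIntegral_const, hIcc2, mul_assoc]
  -- pass to the limit m → ∞
  have hlim : I ≤ C * J := by
    have hev : ∀ᶠ m : ℕ in atTop, I ≤ C * J * ENNReal.ofReal (1 + (n:ℝ)/m) := by
      filter_upwards [eventually_ge_atTop 1] with m hm
      have hm0 : 0 < (m:ℝ) := by exact_mod_cast hm
      have hsplit : ENNReal.ofReal (2*((m:ℝ)+n))
          = ENNReal.ofReal (1 + (n:ℝ)/m) * ENNReal.ofReal (2*(m:ℝ)) := by
        rw [← ENNReal.ofReal_mul (by positivity)]
        congr 1
        field_simp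
      have h2m : ENNReal.ofReal (2*(m:ℝ)) ≠ 0 := by
        simp only [ne_eq, ENNReal.ofReal_eq_zero, not_le]
        positivity
      have hk := key m
      rw [hsplit, ← mul_assoc] at hk
      exact (ENNReal.mul_le_mul_iff_left h2m ENNReal.ofReal_ne_top).mp hk
    refine ge_of_tendsto ?_ hev
    have h1 : Tendsto (fun m : ℕ => (1 + (n:ℝ)/m)) atTop (nhds 1) := by
      have := tendsto_const_div_atTop_nhds_zero_nat (n:ℝ)
      simpa using tendsto_const_nhds.add this
    have h2 : Tendsto (fun m : ℕ => ENNReal.ofReal (1 + (n:ℝ)/m)) atTop (nhds 1) := by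
      have := (ENNReal.continuous_ofReal.tendsto 1).comp h1
      simpa [Function.comp_def] using this
    have h3 := ENNReal.Tendsto.const_mul (a := C * J) h2 (Or.inl one_ne_zero)
    simpa using h3
  -- conclude
  have hTf_eLp : eLpNorm Tf p μ = I ^ (1/q) := by
    rw [eLpNorm_eq_lintegral_rpow_enorm_toReal hp0 hp_top, hI_def]
    rfl
  have hf₀_eLp : eLpNorm f₀ p μ = J ^ (1/q) := by
    rw [eLpNorm_eq_lintegral_rpow_enorm_toReal hp0 hp_top, hJ_def]
    rfl
  have hfin : eLpNorm Tf p μ ≤ ENNReal.ofReal N * eLpNorm f₀ p μ := by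
    rw [hTf_eLp, hf₀_eLp]
    calc I ^ (1/q) ≤ (C * J) ^ (1/q) := ENNReal.rpow_le_rpow hlim (by positivity)
      _ = C ^ (1/q) * J ^ (1/q) := ENNReal.mul_rpow_of_nonneg _ _ (by positivity)
      _ = ENNReal.ofReal N * J ^ (1/q) := by
          rw [hC_def, ← ENNReal.rpow_mul, mul_one_div_cancel hq.ne', ENNReal.rpow_one]
  exact hfin
end
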